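/- Assume 0 < p, q < 1 with p + q ≠ 1, 0 < p_s, p_s^e < 1 with p_s ≠ p_s^e, A ≠ 0, that C x² + D x + E ≠ 0 for all x ∈ [0,1], and let 0 < p_ℓ ≤ p_u ≤ 1. Define f(x) = (A x + B)/(C x² + D x + E), Δ = B² C² + A C (A E − B D), and p* = min(p_u, max(p_ℓ, (−B C + √Δ)/(A C))). Then f(x) ≤ f(p*) for every x ∈ [p_ℓ, p_u]. -/

import Mathlib

set_option maxHeartbeats 2000000

noncomputable section

/-- A = p q [p_s² (1−p_s^e)(p+q−2) + (p_s^e)² (1−p_s)(p+q)] -/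
def Acoef (p q ps pse : ℝ) : ℝ :=
  p * q * (ps ^ 2 * (1 - pse) * (p + q - 2) + pse ^ 2 * (1 - ps) * (p + q))
/-- B = p q (p+q)(2 p_s p_s^e − p_s − p_s^e) -/
def Bcoef (p q ps pse : ℝ) : ℝ := p * q * (p + q) * (2 * ps * pse - ps - pse)
/-- C = (p_s p_s^e − p_s − p_s^e) p_s p_s^e (p+q−1)² (p+q) -/
def Ccoef (p q ps pse : ℝ) : ℝ :=
  (ps * pse - ps - pse) * ps * pse * (p + q - 1) ^ 2 * (p + q)
/-- D = (p_s p_s^e − p_s − p_s^e)(p_s + p_s^e)(1−p−q)(p+q)² -/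
def Dcoef (p q ps pse : ℝ) : ℝ :=
  (ps * pse - ps - pse) * (ps + pse) * (1 - p - q) * (p + q) ^ 2
/-- E = (p_s p_s^e − p_s − p_s^e)(p+q)³ -/
def Ecoef (p q ps pse : ℝ) : ℝ := (ps * pse - ps - pse) * (p + q) ^ 3

/-- Key polynomial inequality, case s < 1. -/
lemma M1_lt_aux (u v s : ℝ) (hu0 : 0 < u) (hu1 : u < 1) (hv0 : 0 < v) (hv1 : v < 1)
    (hs0 : 0 < s) (hs1 : s < 1)
    (ha : 0 < u^2*(1-v)*(s-2)+v^2*(1-u)*s) :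
    0 ≤ (u^2*(1-v)*(s-2)+v^2*(1-u)*s)*(s^2 - u*v*(s-1)^2)
      + (2*u*v-u-v)*(s-1)*s*(s*(u+v)-2*u*v*(s-1)) := by
  have hu1' : (0:ℝ) < 1 - u := by linarith
  have hv1' : (0:ℝ) < 1 - v := by linarith
  have hτ0 : (0:ℝ) < 1 - s := by linarith
  have habound : u^2*(1-v)*(s-2)+v^2*(1-u)*s ≤ v^2*(1-u)*s := by
    nlinarith [mul_pos (mul_pos (mul_pos hu0 hu0) hv1') (by linarith : (0:ℝ) < 2 - s)]
  have hT2 : (2*u*v-u-v)*(s-1)*s*(s*(u+v)-2*u*v*(s-1))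
      = (u+v-2*u*v)*((1-s)*s*(s*(u+v)+2*u*v*(1-s))) := by ring
  have hbpos : 0 < u + v - 2*u*v := by nlinarith
  have hX : (0:ℝ) < s*(u+v)+2*u*v*(1-s) := by positivity
  rcases le_or_gt (u*v*(s-1)^2) (s^2) with h | h
  · have h1 : 0 ≤ (u^2*(1-v)*(s-2)+v^2*(1-u)*s) * (s^2 - u*v*(s-1)^2) :=
      mul_nonneg ha.le (by linarith)
    have h2 : 0 ≤ (u+v-2*u*v)*((1-s)*s*(s*(u+v)+2*u*v*(1-s))) := by positivity
    linarith [hT2 ▸ h2]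
  · have e1 : (u^2*(1-v)*(s-2)+v^2*(1-u)*s) * (u*v*(s-1)^2 - s^2)
        ≤ v^2*(1-u)*s * (u*v*(s-1)^2 - s^2) :=
      mul_le_mul_of_nonneg_right habound (by linarith)
    have e2 : v^2*(1-u)*s * (u*v*(s-1)^2 - s^2) ≤ v^2*(1-u)*s * (u*v*(1-s)^2) := by
      have hx : (0:ℝ) ≤ v^2*(1-u)*s := by positivity
      have h3 : u*v*(s-1)^2 - s^2 ≤ u*v*(1-s)^2 := by nlinarith [sq_nonneg s]
      exact mul_le_mul_of_nonneg_left h3 hx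
    have e4 : v^2*(1-u)*s*(u*v*(1-s)^2) ≤ (u+v-2*u*v)*((1-s)*s*(s*(u+v)+2*u*v*(1-s))) := by
      have hc : v*(1-u) ≤ u+v-2*u*v := by nlinarith
      have hd : u*v*(1-s)*v ≤ s*(u+v)+2*u*v*(1-s) := by
        nlinarith [mul_pos (mul_pos hu0 hv0) hτ0, mul_pos hs0 (by linarith : (0:ℝ) < u+v)]
      have key : (v*(1-u))*(u*v*(1-s)*v) ≤ (u+v-2*u*v)*(s*(u+v)+2*u*v*(1-s)) :=
        mul_le_mul hc hd (by positivity) hbpos.le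
      have hx : (0:ℝ) ≤ (1-s)*s := by positivity
      calc v^2*(1-u)*s*(u*v*(1-s)^2) = ((1-s)*s) * ((v*(1-u))*(u*v*(1-s)*v)) := by ring
        _ ≤ ((1-s)*s) * ((u+v-2*u*v)*(s*(u+v)+2*u*v*(1-s))) := mul_le_mul_of_nonneg_left key hx
        _ = (u+v-2*u*v)*((1-s)*s*(s*(u+v)+2*u*v*(1-s))) := by ring
    rw [hT2]; linarith [e1, e2, e4]

/-- Key polynomial inequality, case s > 1. -/
lemma M1_gt_aux (u v s : ℝ) (hu0 : 0 < u) (hu1 : u < 1) (hv0 : 0 < v) (hv1 : v < 1)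
    (hs1 : 1 < s) (hs2 : s < 2)
    (ha : 0 < u^2*(1-v)*(s-2)+v^2*(1-u)*s)
    (hab : 0 < u^2*(1-v)*(s-2)+v^2*(1-u)*s + s*(2*u*v-u-v))
    (hG : 0 < u*v*(s-1)^2 - (u+v)*(s-1)*s + s^2) :
    0 ≤ (u^2*(1-v)*(s-2)+v^2*(1-u)*s)*(s^2 - u*v*(s-1)^2)
      + (2*u*v-u-v)*(s-1)*s*(s*(u+v)-2*u*v*(s-1)) := by
  have hid : (u^2*(1-v)*(s-2)+v^2*(1-u)*s)*(s^2 - u*v*(s-1)^2)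
      + (2*u*v-u-v)*(s-1)*s*(s*(u+v)-2*u*v*(s-1))
      = (u^2*(1-v)*(s-2)+v^2*(1-u)*s)*(u*v*(s-1)^2 - (u+v)*(s-1)*s + s^2)
        + (s-1)*(s*(u+v)-2*u*v*(s-1))*((u^2*(1-v)*(s-2)+v^2*(1-u)*s) + s*(2*u*v-u-v)) := by
    ring
  have hX : 0 < s*(u+v)-2*u*v*(s-1) := by nlinarith
  rw [hid]
  have t1 : 0 ≤ (u^2*(1-v)*(s-2)+v^2*(1-u)*s)*(u*v*(s-1)^2 - (u+v)*(s-1)*s + s^2) :=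
    mul_nonneg ha.le hG.le
  have t2 : 0 ≤ (s-1)*(s*(u+v)-2*u*v*(s-1))*((u^2*(1-v)*(s-2)+v^2*(1-u)*s) + s*(2*u*v-u-v)) :=
    mul_nonneg (mul_nonneg (by linarith) hX.le) (by linarith)
  linarith

/-- Comparison step: characterizes f x ≤ f y via a quadratic expression. -/
lemma step_aux (A B C D E x y : ℝ) (hAC : A*C ≠ 0)
    (hgx : C*x^2+D*x+E < 0) (hgy : C*y^2+D*y+E < 0)
    (hN : 0 ≤ ((A*C*x+B*C) - (A*C*y+B*C)) *
      ((A*C*x+B*C)*(A*C*y+B*C) - (B^2*C^2+A*C*(A*E-B*D)))) :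
    (A*x+B)/(C*x^2+D*x+E) ≤ (A*y+B)/(C*y^2+D*y+E) := by
  have hACsq : 0 < (A*C)^2 := lt_of_le_of_ne (sq_nonneg _) (Ne.symm (pow_ne_zero 2 hAC))
  have hnum : 0 ≤ (A*y+B)*(C*x^2+D*x+E) - (A*x+B)*(C*y^2+D*y+E) := by
    have hid : (A*C)^2 * ((A*y+B)*(C*x^2+D*x+E) - (A*x+B)*(C*y^2+D*y+E))
        = ((A*C*x+B*C) - (A*C*y+B*C)) *
          ((A*C*x+B*C)*(A*C*y+B*C) - (B^2*C^2+A*C*(A*E-B*D))) := by ring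
    exact nonneg_of_mul_nonneg_right (hid ▸ hN) hACsq
  have hprod : 0 < (C*x^2+D*x+E) * (C*y^2+D*y+E) := mul_pos_of_neg_of_neg hgx hgy
  have hdiff : (A*y+B)/(C*y^2+D*y+E) - (A*x+B)/(C*x^2+D*x+E)
      = ((A*y+B)*(C*x^2+D*x+E) - (A*x+B)*(C*y^2+D*y+E)) / ((C*x^2+D*x+E)*(C*y^2+D*y+E)) := by
    rw [div_sub_div _ _ hgy.ne hgx.ne, mul_comm (C*y^2+D*y+E) (C*x^2+D*x+E)]
    ring_nf
  have := div_nonneg hnum hprod.le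
  linarith [hdiff ▸ this]

/-- Abstract core: projection of the critical point maximizes f over [pl,pu]. -/
lemma core_aux (A B C D E pl pu : ℝ) (hA : A ≠ 0) (hC : C < 0) (hB : B < 0)
    (hΔ : 0 ≤ B^2*C^2 + A*C*(A*E - B*D))
    (hg : ∀ t ∈ Set.Icc (0:ℝ) 1, C*t^2 + D*t + E < 0)
    (hF2 : A*C < 0 → -Real.sqrt (B^2*C^2 + A*C*(A*E - B*D)) ≤ A*C + B*C)
    (hl : 0 < pl) (hlu : pl ≤ pu) (hu : pu ≤ 1) (x : ℝ) (hx : x ∈ Set.Icc pl pu) :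
    (A*x+B)/(C*x^2+D*x+E) ≤
      (A*(min pu (max pl ((-(B*C) + Real.sqrt (B^2*C^2 + A*C*(A*E - B*D)))/(A*C)))) + B) /
      (C*(min pu (max pl ((-(B*C) + Real.sqrt (B^2*C^2 + A*C*(A*E - B*D)))/(A*C))))^2
        + D*(min pu (max pl ((-(B*C) + Real.sqrt (B^2*C^2 + A*C*(A*E - B*D)))/(A*C)))) + E) := by
  have hAC : A*C ≠ 0 := mul_ne_zero hA hC.ne
  set s := Real.sqrt (B^2*C^2 + A*C*(A*E - B*D)) with hs
  set r := (-(B*C) + s)/(A*C) with hr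
  have hs0 : 0 ≤ s := Real.sqrt_nonneg _
  have hs2 : s^2 = B^2*C^2 + A*C*(A*E - B*D) := Real.sq_sqrt hΔ
  have hur : A*C*r + B*C = s := by
    rw [hr, mul_div_cancel₀ _ hAC]; ring
  obtain ⟨hx1, hx2⟩ := hx
  have hgx := hg x ⟨by linarith, by linarith⟩
  have hBC : 0 < B*C := mul_pos_of_neg_of_neg hB hC
  rcases le_total r pl with h1 | h1
  · -- pstar = pl
    rw [max_eq_left h1, min_eq_right hlu]
    have hgp := hg pl ⟨hl.le, le_trans hlu hu⟩
    apply step_aux A B C D E x pl hAC hgx hgp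
    rcases hAC.lt_or_gt with hac | hac
    · have hf2 := hF2 hac
      have h_upl_le : A*C*pl + B*C ≤ s := by
        have h3 : 0 ≤ (-(A*C))*(pl - r) := mul_nonneg (by linarith) (by linarith)
        nlinarith [hur]
      have h_ux_le : A*C*x + B*C ≤ A*C*pl + B*C := by
        have h3 : 0 ≤ (-(A*C))*(x - pl) := mul_nonneg (by linarith) (by linarith)
        nlinarith
      have h_ux_ge : -s ≤ A*C*x + B*C := by
        have h3 : 0 ≤ (-(A*C))*(1 - x) := mul_nonneg (by linarith) (by linarith)
        nlinarith [hf2]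
      apply mul_nonneg_of_nonpos_of_nonpos (by linarith)
      nlinarith [mul_nonneg (by linarith : 0 ≤ s - (A*C*pl+B*C)) (by linarith : 0 ≤ (A*C*x+B*C) + s),
        mul_nonneg hs0 (by linarith : 0 ≤ (A*C*pl+B*C) - (A*C*x+B*C))]
    · have h_upl_ge : s ≤ A*C*pl + B*C := by
        have h3 : 0 ≤ (A*C)*(pl - r) := mul_nonneg (by linarith) (by linarith)
        nlinarith [hur]
      have h_ux_ge : A*C*pl + B*C ≤ A*C*x + B*C := by
        have h3 : 0 ≤ (A*C)*(x - pl) := mul_nonneg (by linarith) (by linarith)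
        nlinarith
      apply mul_nonneg (by linarith)
      nlinarith [mul_le_mul h_upl_ge (le_refl (A*C*pl+B*C)) (by linarith) (by linarith)]
  · rcases le_total pu r with h2 | h2
    · -- pstar = pu
      rw [max_eq_right h1, min_eq_left h2]
      have hgp := hg pu ⟨by linarith, hu⟩
      apply step_aux A B C D E x pu hAC hgx hgp
      rcases hAC.lt_or_gt with hac | hac
      · have h_upu_ge : s ≤ A*C*pu + B*C := by
          have h3 : 0 ≤ (-(A*C))*(r - pu) := mul_nonneg (by linarith) (by linarith)
          nlinarith [hur]
        have h_ux_ge : A*C*pu + B*C ≤ A*C*x + B*C := by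
          have h3 : 0 ≤ (-(A*C))*(pu - x) := mul_nonneg (by linarith) (by linarith)
          nlinarith
        apply mul_nonneg (by linarith)
        nlinarith [mul_le_mul h_upu_ge (le_refl (A*C*pu+B*C)) (by linarith) (by linarith)]
      · have h_upu_le : A*C*pu + B*C ≤ s := by
          have h3 : 0 ≤ (A*C)*(r - pu) := mul_nonneg (by linarith) (by linarith)
          nlinarith [hur]
        have h_ux_le : A*C*x + B*C ≤ A*C*pu + B*C := by
          have h3 : 0 ≤ (A*C)*(pu - x) := mul_nonneg (by linarith) (by linarith)
          nlinarith
        have h_ux_ge : -s ≤ A*C*x + B*C := by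
          have h3 : 0 ≤ (A*C)*x := mul_nonneg (by linarith) (by linarith)
          nlinarith [hBC, hs0]
        apply mul_nonneg_of_nonpos_of_nonpos (by linarith)
        nlinarith [mul_nonneg (by linarith : 0 ≤ s - (A*C*pu+B*C)) (by linarith : 0 ≤ (A*C*x+B*C) + s),
          mul_nonneg hs0 (by linarith : 0 ≤ (A*C*pu+B*C) - (A*C*x+B*C))]
    · -- pstar = r, the interior critical point
      rw [max_eq_right h1, min_eq_right h2]
      have hgr := hg r ⟨by linarith, by linarith⟩
      apply step_aux A B C D E x r hAC hgx hgr
      have hid : ((A*C*x+B*C) - (A*C*r+B*C)) *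
          ((A*C*x+B*C)*(A*C*r+B*C) - (B^2*C^2+A*C*(A*E-B*D)))
          = s * ((A*C*x+B*C) - s)^2 := by
        rw [hur, ← hs2]; ring
      rw [hid]
      positivity

lemma pos_cancel_aux (P x : ℝ) (hP : 0 < P) (h : 0 < P * x) : 0 < x := by
  by_contra h'
  push_neg at h'
  nlinarith

lemma pos_of_neg_mul_aux (m S G : ℝ) (hm : m < 0) (hS : 0 < S) (h : m*(S*G) < 0) : 0 < G := by
  by_contra h'
  push_neg at h'
  nlinarith [mul_nonneg_of_nonpos_of_nonpos hm.le (mul_nonpos_of_nonneg_of_nonpos hS.le h')]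

/-- Remark 2: projection of the closed-form candidate onto [p_ℓ, p_u] is optimal. -/
theorem stmt3 (p q ps pse pl pu : ℝ)
    (hp0 : 0 < p) (hp1 : p < 1) (hq0 : 0 < q) (hq1 : q < 1) (hpq : p + q ≠ 1)
    (hs0 : 0 < ps) (hs1 : ps < 1) (he0 : 0 < pse) (he1 : pse < 1) (hne : ps ≠ pse)
    (hA : Acoef p q ps pse ≠ 0)
    (hden : ∀ x ∈ Set.Icc (0 : ℝ) 1,
      Ccoef p q ps pse * x ^ 2 + Dcoef p q ps pse * x + Ecoef p q ps pse ≠ 0)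
    (hl : 0 < pl) (hlu : pl ≤ pu) (hu : pu ≤ 1) :
    let A := Acoef p q ps pse
    let B := Bcoef p q ps pse
    let C := Ccoef p q ps pse
    let D := Dcoef p q ps pse
    let E := Ecoef p q ps pse
    let f : ℝ → ℝ := fun x => (A * x + B) / (C * x ^ 2 + D * x + E)
    let Δ := B ^ 2 * C ^ 2 + A * C * (A * E - B * D)
    let pstar := min pu (max pl ((-(B * C) + Real.sqrt Δ) / (A * C)))
    ∀ x ∈ Set.Icc pl pu, f x ≤ f pstar := by
  intro A B C D E f Δ pstar x hx
  have hS0 : 0 < p + q := by linarith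
  have hS2 : p + q < 2 := by linarith
  have hm : ps * pse - ps - pse < 0 := by nlinarith
  have hPQ : 0 < p * q := mul_pos hp0 hq0
  have hSne : p + q - 1 ≠ 0 := sub_ne_zero.mpr hpq
  have hSsq : 0 < (p + q - 1)^2 := lt_of_le_of_ne (sq_nonneg _) (Ne.symm (pow_ne_zero 2 hSne))
  have hCneg : Ccoef p q ps pse < 0 := by
    have h1 : Ccoef p q ps pse = (ps*pse - ps - pse) * (ps * pse * (p+q-1)^2 * (p+q)) := by
      unfold Ccoef; ring
    rw [h1]
    exact mul_neg_of_neg_of_pos hm (by positivity)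
  have hBneg : Bcoef p q ps pse < 0 := by
    have h1 : 2*ps*pse - ps - pse < 0 := by nlinarith
    have h2 : Bcoef p q ps pse = (p*q*(p+q)) * (2*ps*pse - ps - pse) := by unfold Bcoef; ring
    rw [h2]; exact mul_neg_of_pos_of_neg (by positivity) h1
  have hEneg : Ecoef p q ps pse < 0 := by
    have h2 : Ecoef p q ps pse = (ps*pse - ps - pse) * (p+q)^3 := by unfold Ecoef; ring
    rw [h2]; exact mul_neg_of_neg_of_pos hm (by positivity)
  -- Δ ≥ 0 via an explicit factorization
  have hΔ0 : 0 ≤ Bcoef p q ps pse ^2 * Ccoef p q ps pse ^2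
      + Acoef p q ps pse * Ccoef p q ps pse *
        (Acoef p q ps pse * Ecoef p q ps pse - Bcoef p q ps pse * Dcoef p q ps pse) := by
    have hRHS : 0 ≤ ((ps*pse - ps - pse)*p*q*(p+q)^2*(p+q-1)*(ps-pse))^2 *
        (ps*pse*(ps + (p+q)*pse*(1-ps))*(pse + (2-(p+q))*ps*(1-pse))) := by
      have f1 : 0 < ps + (p+q)*pse*(1-ps) := by
        have : 0 < (p+q)*pse*(1-ps) := mul_pos (mul_pos hS0 he0) (by linarith)
        linarith
      have f2 : 0 < pse + (2-(p+q))*ps*(1-pse) := by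
        have : 0 < (2-(p+q))*ps*(1-pse) := mul_pos (mul_pos (by linarith) hs0) (by linarith)
        linarith
      positivity
    have hid : Bcoef p q ps pse ^2 * Ccoef p q ps pse ^2
        + Acoef p q ps pse * Ccoef p q ps pse *
          (Acoef p q ps pse * Ecoef p q ps pse - Bcoef p q ps pse * Dcoef p q ps pse)
        = ((ps*pse - ps - pse)*p*q*(p+q)^2*(p+q-1)*(ps-pse))^2 *
          (ps*pse*(ps + (p+q)*pse*(1-ps))*(pse + (2-(p+q))*ps*(1-pse))) := by
      unfold Acoef Bcoef Ccoef Dcoef Ecoef; ring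
    exact hid ▸ hRHS
  -- the denominator is negative on all of [0,1]
  have hgneg : ∀ t ∈ Set.Icc (0:ℝ) 1,
      Ccoef p q ps pse * t^2 + Dcoef p q ps pse * t + Ecoef p q ps pse < 0 := by
    intro t ht
    rcases lt_or_ge (Ccoef p q ps pse * t^2 + Dcoef p q ps pse * t + Ecoef p q ps pse) 0 with h | h
    · exact h
    · exfalso
      have hpos : 0 < Ccoef p q ps pse * t^2 + Dcoef p q ps pse * t + Ecoef p q ps pse :=
        h.lt_of_ne' (hden t ht)
      have hcont : ContinuousOn
          (fun y : ℝ => Ccoef p q ps pse * y^2 + Dcoef p q ps pse * y + Ecoef p q ps pse)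
          (Set.Icc 0 t) := by fun_prop
      have h0 : Ccoef p q ps pse * (0:ℝ)^2 + Dcoef p q ps pse * 0 + Ecoef p q ps pse < 0 := by
        simpa using hEneg
      obtain ⟨c, hc, hc0⟩ := intermediate_value_Icc ht.1 hcont ⟨h0.le, hpos.le⟩
      exact hden c ⟨hc.1, hc.2.trans ht.2⟩ hc0
  -- the key inequality needed when A*C < 0
  have hF2 : Acoef p q ps pse * Ccoef p q ps pse < 0 →
      -Real.sqrt (Bcoef p q ps pse ^2 * Ccoef p q ps pse ^2
        + Acoef p q ps pse * Ccoef p q ps pse *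
          (Acoef p q ps pse * Ecoef p q ps pse - Bcoef p q ps pse * Dcoef p q ps pse))
      ≤ Acoef p q ps pse * Ccoef p q ps pse + Bcoef p q ps pse * Ccoef p q ps pse := by
    intro hac
    set A' := Acoef p q ps pse with hA'
    set B' := Bcoef p q ps pse with hB'
    set C' := Ccoef p q ps pse with hC'
    set D' := Dcoef p q ps pse with hD'
    set E' := Ecoef p q ps pse with hE'
    have hApos : 0 < A' := by
      rcases lt_or_ge 0 A' with h | h
      · exact h
      · exfalso; nlinarith [mul_nonneg_of_nonpos_of_nonpos h hCneg.le]
    have hsq : 0 ≤ Real.sqrt (B'^2*C'^2 + A'*C'*(A'*E' - B'*D')) := Real.sqrt_nonneg _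
    rcases le_or_gt (A' + B') 0 with hab | hab
    · have : 0 ≤ C' * (A' + B') := mul_nonneg_of_nonpos_of_nonpos hCneg.le hab
      nlinarith
    · have ha' : 0 < ps^2*(1-pse)*(p+q-2) + pse^2*(1-ps)*(p+q) := by
        apply pos_cancel_aux (p*q) _ hPQ
        exact hApos
      have hab' : 0 < ps^2*(1-pse)*(p+q-2) + pse^2*(1-ps)*(p+q) + (p+q)*(2*ps*pse-ps-pse) := by
        apply pos_cancel_aux (p*q) _ hPQ
        have h4 : A' + B' = p*q*((ps^2*(1-pse)*(p+q-2) + pse^2*(1-ps)*(p+q))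
            + (p+q)*(2*ps*pse-ps-pse)) := by
          rw [hA', hB']; unfold Acoef Bcoef; ring
        rw [h4] at hab
        exact hab
      have hM1 : 0 ≤ (ps^2*(1-pse)*(p+q-2)+pse^2*(1-ps)*(p+q))*((p+q)^2 - ps*pse*((p+q)-1)^2)
          + (2*ps*pse-ps-pse)*((p+q)-1)*(p+q)*((p+q)*(ps+pse)-2*ps*pse*((p+q)-1)) := by
        rcases lt_or_gt_of_ne hpq with hS | hS
        · exact M1_lt_aux ps pse (p+q) hs0 hs1 he0 he1 hS0 hS ha'
        · have hG : 0 < ps*pse*((p+q)-1)^2 - (ps+pse)*((p+q)-1)*(p+q) + (p+q)^2 := by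
            have hg1 := hgneg 1 ⟨zero_le_one, le_refl 1⟩
            have hid1 : C' * (1:ℝ)^2 + D' * 1 + E'
                = (ps*pse - ps - pse) * ((p+q) *
                  (ps*pse*((p+q)-1)^2 - (ps+pse)*((p+q)-1)*(p+q) + (p+q)^2)) := by
              rw [hC', hD', hE']; unfold Ccoef Dcoef Ecoef; ring
            rw [hid1] at hg1
            exact pos_of_neg_mul_aux _ _ _ hm hS0 hg1
          have := M1_gt_aux ps pse (p+q) hs0 hs1 he0 he1 hS hS2 ha' (by linarith [hab']) hG
          linarith [this]
      have hM : A'*E' - B'*D' - C'*A' - 2*C'*B' ≤ 0 := by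
        have hid2 : A'*E' - B'*D' - C'*A' - 2*C'*B'
            = (ps*pse - ps - pse) * ((p*q) * ((p+q) *
              ((ps^2*(1-pse)*(p+q-2)+pse^2*(1-ps)*(p+q))*((p+q)^2 - ps*pse*((p+q)-1)^2)
              + (2*ps*pse-ps-pse)*((p+q)-1)*(p+q)*((p+q)*(ps+pse)-2*ps*pse*((p+q)-1))))) := by
          rw [hA', hB', hC', hD', hE']; unfold Acoef Bcoef Ccoef Dcoef Ecoef; ring
        rw [hid2]
        apply mul_nonpos_of_nonpos_of_nonneg hm.le
        exact mul_nonneg hPQ.le (mul_nonneg hS0.le hM1)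
      have hsqle : (A'*C' + B'*C')^2 ≤ B'^2*C'^2 + A'*C'*(A'*E' - B'*D') := by
        have hid3 : B'^2*C'^2 + A'*C'*(A'*E' - B'*D') - (A'*C' + B'*C')^2
            = A'*C' * (A'*E' - B'*D' - C'*A' - 2*C'*B') := by ring
        nlinarith [mul_nonneg_of_nonpos_of_nonpos hac.le hM]
      have hs2' : Real.sqrt (B'^2*C'^2 + A'*C'*(A'*E' - B'*D')) ^ 2
          = B'^2*C'^2 + A'*C'*(A'*E' - B'*D') := Real.sq_sqrt hΔ0
      nlinarith [hsq, hsqle, hs2',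
        sq_nonneg (A'*C' + B'*C' + Real.sqrt (B'^2*C'^2 + A'*C'*(A'*E' - B'*D')))]
  exact core_aux (Acoef p q ps pse) (Bcoef p q ps pse) (Ccoef p q ps pse) (Dcoef p q ps pse)
    (Ecoef p q ps pse) pl pu hA hCneg hBneg hΔ0 hgneg hF2 hl hlu hu x hx
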